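/- Let A : ℝ^n → ℝ^{N×n_u} and b : ℝ^n → ℝ^N be functions on a set D ⊆ ℝ^n satisfying ‖A(x) − A(x′)‖_∞ ≤ L_A ‖x − x′‖_∞ and ‖b(x) − b(x′)‖_∞ ≤ L_b ‖x − x′‖_∞ for all x, x′ ∈ D, where ‖·‖_∞ on matrices denotes the operator norm induced by the ℓ∞ vector norm. Suppose for some x ∈ D there exist u* ∈ ℝ^{n_u} and c > 0 with A(x)u* + b(x) ≥ c·1 (componentwise). Then for every x′ ∈ D with ‖x − x′‖_∞ ≤ c / (L_A ‖u*‖_∞ + L_b), it holds that A(x′)u* + b(x′) ≥ 0 componentwise. -/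
import Mathlib


/-- `ℓ∞` norm of a vector. -/
noncomputable def vecNormInf {N : ℕ} (v : Fin N → ℝ) : ℝ := ⨆ i, |v i|

/-- `ℓ∞ → ℓ∞` induced operator norm of a matrix (max absolute row sum). -/
noncomputable def matNormInf {N m : ℕ} (A : Matrix (Fin N) (Fin m) ℝ) : ℝ := ⨆ i, ∑ j, |A i j|

lemma abs_le_vecNormInf {N : ℕ} (v : Fin N → ℝ) (i : Fin N) : |v i| ≤ vecNormInf v := by
  unfold vecNormInf
  exact le_ciSup (f := fun i => |v i|) (Set.Finite.bddAbove (Set.finite_range _)) i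

lemma vecNormInf_nonneg {N : ℕ} (v : Fin N → ℝ) : 0 ≤ vecNormInf v :=
  Real.iSup_nonneg fun i => abs_nonneg _

lemma rowsum_le_matNormInf {N m : ℕ} (M : Matrix (Fin N) (Fin m) ℝ) (i : Fin N) :
    ∑ j, |M i j| ≤ matNormInf M := by
  unfold matNormInf
  exact le_ciSup (f := fun i => ∑ j, |M i j|) (Set.Finite.bddAbove (Set.finite_range _)) i

lemma abs_mulVec_le {N m : ℕ} (M : Matrix (Fin N) (Fin m) ℝ) (u : Fin m → ℝ) (i : Fin N) :
    |M.mulVec u i| ≤ matNormInf M * vecNormInf u := by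
  calc |M.mulVec u i| ≤ ∑ j, |M i j * u j| := by
        rw [Matrix.mulVec, dotProduct]
        exact Finset.abs_sum_le_sum_abs _ _
    _ = ∑ j, |M i j| * |u j| := by simp [abs_mul]
    _ ≤ ∑ j, |M i j| * vecNormInf u :=
        Finset.sum_le_sum fun j _ =>
          mul_le_mul_of_nonneg_left (abs_le_vecNormInf u j) (abs_nonneg _)
    _ = (∑ j, |M i j|) * vecNormInf u := by rw [Finset.sum_mul]
    _ ≤ matNormInf M * vecNormInf u :=
        mul_le_mul_of_nonneg_right (rowsum_le_matNormInf M i) (vecNormInf_nonneg u)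

/-- Proposition 3: if the CBF conditions have slack `c > 0` at `x` with
input `u`, they remain feasible (with the same input) at any `x'` with
`‖x − x'‖_∞ ≤ c / (L_A ‖u‖_∞ + L_b)`. -/
theorem probe_and_expand {n nu N : ℕ}
    (D : Set (Fin n → ℝ))
    (A : (Fin n → ℝ) → Matrix (Fin N) (Fin nu) ℝ)
    (b : (Fin n → ℝ) → (Fin N → ℝ))
    (LA Lb : ℝ)
    (hA : ∀ x ∈ D, ∀ x' ∈ D, matNormInf (A x - A x') ≤ LA * vecNormInf (x - x'))
    (hb : ∀ x ∈ D, ∀ x' ∈ D, vecNormInf (b x - b x') ≤ Lb * vecNormInf (x - x'))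
    (x : Fin n → ℝ) (hx : x ∈ D)
    (u : Fin nu → ℝ) (c : ℝ) (hc : 0 < c)
    (hpos : 0 < LA * vecNormInf u + Lb)
    (hfeas : ∀ i, c ≤ (A x).mulVec u i + b x i)
    (x' : Fin n → ℝ) (hx' : x' ∈ D)
    (hclose : vecNormInf (x - x') ≤ c / (LA * vecNormInf u + Lb)) :
    ∀ i, 0 ≤ (A x').mulVec u i + b x' i := by
  intro i
  have hd : (LA * vecNormInf u + Lb) * vecNormInf (x - x') ≤ c := by
    rw [mul_comm]
    exact (le_div_iff₀ hpos).mp hclose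
  have h1 : |(A x - A x').mulVec u i| ≤ matNormInf (A x - A x') * vecNormInf u :=
    abs_mulVec_le _ u i
  have h2 : |(b x - b x') i| ≤ vecNormInf (b x - b x') := abs_le_vecNormInf _ i
  have hA' := hA x hx x' hx'
  have hb' := hb x hx x' hx'
  have h3 : matNormInf (A x - A x') * vecNormInf u ≤ LA * vecNormInf (x - x') * vecNormInf u :=
    mul_le_mul_of_nonneg_right hA' (vecNormInf_nonneg u)
  have hsplit : (A x - A x').mulVec u i = (A x).mulVec u i - (A x').mulVec u i := by
    rw [Matrix.sub_mulVec]; rfl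
  have h4 := hfeas i
  have e1 := abs_le.mp h1
  have e2 := abs_le.mp h2
  simp only [hsplit, Pi.sub_apply] at e1 e2
  nlinarith [e1.1, e2.1, h3, hb', hd, h4]
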